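/- The group ℬ₂(ℤ/3) is infinite cyclic: the abelian group generated by symbols (b₁,b₂) with b₁,b₂ ∈ ℤ/3 and ⟨b₁,b₂⟩ = ℤ/3, modulo the reordering relation and the blow-up relations, is isomorphic to ℤ. -/

import Mathlib

/-- Generators of the symbols group `𝒮₂(H)`: pairs `(b₁, b₂)` of elements of
`H^∨` (identified with `H`) generating `H^∨`. -/
abbrev Gen2 (H : Type*) [AddCommGroup H] : Type _ :=
  {p : H × H // AddSubgroup.closure {p.1, p.2} = ⊤}

open FreeAbelianGroup in
/-- The reordering relation (O) and the blow-up relations (B) defining `ℬ₂(H)`. -/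
def Rel2 (H : Type*) [AddCommGroup H] : Set (FreeAbelianGroup (Gen2 H)) :=
  {x | (∃ g g' : Gen2 H, g.1.1 = g'.1.2 ∧ g.1.2 = g'.1.1 ∧ x = of g - of g') ∨
       (∃ g g' : Gen2 H, g.1.1 = g.1.2 ∧ g'.1.1 = 0 ∧ g'.1.2 = g.1.2 ∧
          x = of g - of g') ∨
       (∃ g g₁ g₂ : Gen2 H, g.1.1 ≠ g.1.2 ∧ g₁.1 = (g.1.1 - g.1.2, g.1.2) ∧
          g₂.1 = (g.1.1, g.1.2 - g.1.1) ∧ x = of g - of g₁ - of g₂)}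

/-- The group `ℬ₂(H)`: the free abelian group on generating pairs modulo the
reordering and blow-up relations. -/
abbrev B2 (H : Type*) [AddCommGroup H] : Type _ :=
  FreeAbelianGroup (Gen2 H) ⧸ AddSubgroup.closure (Rel2 H)

namespace B2Aux

open FreeAbelianGroup

/-- weight function -/
def wt (a b : ZMod 3) : ℤ :=
  (if a = 2 ∨ b = 2 then 0 else 1) - (if a = 1 ∨ b = 1 then 0 else 1)

lemma wt_symm : ∀ a b : ZMod 3, wt a b = wt b a := by decide
lemma wt_diag : ∀ b : ZMod 3, wt b b = wt 0 b := by decide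
lemma wt_blow : ∀ a b : ZMod 3, a ≠ b → wt a b = wt (a - b) b + wt a (b - a) := by decide

lemma zmod3_cases : ∀ a : ZMod 3, a = 0 ∨ a = 1 ∨ a = 2 := by decide

lemma closure_top_of_one {s : Set (ZMod 3)} (h : (1 : ZMod 3) ∈ AddSubgroup.closure s) :
    AddSubgroup.closure s = ⊤ := by
  rw [AddSubgroup.eq_top_iff']
  intro x
  rcases zmod3_cases x with hx | hx | hx <;> subst hx
  · exact zero_mem _
  · exact h
  · have : (2 : ZMod 3) = 1 + 1 := by decide
    rw [this]; exact add_mem h h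

lemma gen_top (a b : ZMod 3) (h : a = 1 ∨ b = 1 ∨ a = 2 ∨ b = 2) :
    AddSubgroup.closure {a, b} = ⊤ := by
  apply closure_top_of_one
  have h2 : ∀ c : ZMod 3, c = 2 → c ∈ ({a,b} : Set (ZMod 3)) →
      (1 : ZMod 3) ∈ AddSubgroup.closure {a, b} := by
    intro c hc hmem
    have : (1 : ZMod 3) = c + c := by rw [hc]; decide
    rw [this]
    exact add_mem (AddSubgroup.subset_closure hmem) (AddSubgroup.subset_closure hmem)
  rcases h with h | h | h | h
  · exact AddSubgroup.subset_closure (by simp [h])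
  · exact AddSubgroup.subset_closure (by simp [h])
  · exact h2 a h (by simp)
  · exact h2 b h (by simp)

/-- generator constructor -/
def gen (a b : ZMod 3) (h : a = 1 ∨ b = 1 ∨ a = 2 ∨ b = 2) : Gen2 (ZMod 3) :=
  ⟨(a, b), gen_top a b h⟩

abbrev S : AddSubgroup (FreeAbelianGroup (Gen2 (ZMod 3))) := AddSubgroup.closure (Rel2 (ZMod 3))

def g01 : Gen2 (ZMod 3) := gen 0 1 (by tauto)
def g10 : Gen2 (ZMod 3) := gen 1 0 (by tauto)
def g11 : Gen2 (ZMod 3) := gen 1 1 (by tauto)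
def g02 : Gen2 (ZMod 3) := gen 0 2 (by tauto)
def g20 : Gen2 (ZMod 3) := gen 2 0 (by tauto)
def g22 : Gen2 (ZMod 3) := gen 2 2 (by tauto)
def g12 : Gen2 (ZMod 3) := gen 1 2 (by tauto)
def g21 : Gen2 (ZMod 3) := gen 2 1 (by tauto)

lemma mem_S_of_rel {x} (h : x ∈ Rel2 (ZMod 3)) : x ∈ S := AddSubgroup.subset_closure h

-- symmetry relation
lemma sym_mem (g g' : Gen2 (ZMod 3)) (h1 : g.1.1 = g'.1.2) (h2 : g.1.2 = g'.1.1) :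
    of g - of g' ∈ S :=
  mem_S_of_rel (Or.inl ⟨g, g', h1, h2, rfl⟩)

-- of (2,1) ∈ S, from blow-up on (0,1)
lemma g21_mem : of g21 ∈ S := by
  have h : -(of g21) ∈ S := by
    have : (-(of g21) : FreeAbelianGroup (Gen2 (ZMod 3))) = of g01 - of g21 - of g01 := by abel
    rw [this]
    exact mem_S_of_rel (Or.inr (Or.inr ⟨g01, g21, g01, by decide, by
      show g21.1 = _; decide, by show g01.1 = _; decide, rfl⟩))
  simpa using S.neg_mem h

lemma g12_mem : of g12 ∈ S := by
  have h : -(of g12) ∈ S := by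
    have : (-(of g12) : FreeAbelianGroup (Gen2 (ZMod 3))) = of g02 - of g12 - of g02 := by abel
    rw [this]
    exact mem_S_of_rel (Or.inr (Or.inr ⟨g02, g12, g02, by decide, by
      show g12.1 = _; decide, by show g02.1 = _; decide, rfl⟩))
  simpa using S.neg_mem h

-- (1,1) - (0,1) ∈ S
lemma g11_rel : of g11 - of g01 ∈ S :=
  mem_S_of_rel (Or.inr (Or.inl ⟨g11, g01, rfl, rfl, rfl, rfl⟩))

lemma g22_rel : of g22 - of g02 ∈ S :=
  mem_S_of_rel (Or.inr (Or.inl ⟨g22, g02, rfl, rfl, rfl, rfl⟩))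

-- (1,2) = (2,2) + (1,1):  of g12 - of g22 - of g11 ∈ S
lemma blow12 : of g12 - of g22 - of g11 ∈ S :=
  mem_S_of_rel (Or.inr (Or.inr ⟨g12, g22, g11, by decide, by show g22.1 = _; decide,
    by show g11.1 = _; decide, rfl⟩))

-- key: of g02 + of g01 ∈ S
lemma key02 : of g02 + of g01 ∈ S := by
  have h : (of g02 + of g01 : FreeAbelianGroup (Gen2 (ZMod 3))) =
      -(of g12 - of g22 - of g11) + of g12 - (of g22 - of g02) - (of g11 - of g01) := by abel
  rw [h]
  exact S.sub_mem (S.sub_mem (S.add_mem (S.neg_mem blow12) g12_mem) g22_rel) g11_rel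

lemma phi_vanish : ∀ x ∈ Rel2 (ZMod 3),
    (FreeAbelianGroup.lift (fun g : Gen2 (ZMod 3) => wt g.1.1 g.1.2)) x = 0 := by
  rintro x (⟨g, g', h1, h2, rfl⟩ | ⟨g, g', h1, h2, h3, rfl⟩ | ⟨g, g₁, g₂, hne, h1, h2, rfl⟩)
  · simp only [map_sub, FreeAbelianGroup.lift_apply_of, h1, h2, wt_symm, sub_self]
  · simp only [map_sub, FreeAbelianGroup.lift_apply_of, h1, h2, h3]
    rw [wt_diag]; ring
  · simp only [map_sub, FreeAbelianGroup.lift_apply_of, h1, h2]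
    have := wt_blow g.1.1 g.1.2 hne
    simp only [this]; ring

noncomputable def φ : B2 (ZMod 3) →+ ℤ :=
  QuotientAddGroup.lift S (FreeAbelianGroup.lift (fun g : Gen2 (ZMod 3) => wt g.1.1 g.1.2))
    (by
      rw [AddSubgroup.closure_le]
      intro x hx
      exact phi_vanish x hx)

def t : B2 (ZMod 3) := QuotientAddGroup.mk (of g01)

noncomputable def ψ : ℤ →+ B2 (ZMod 3) := zmultiplesHom _ t

lemma phi_mk (x : FreeAbelianGroup (Gen2 (ZMod 3))) :
    φ (QuotientAddGroup.mk x) =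
      (FreeAbelianGroup.lift (fun g : Gen2 (ZMod 3) => wt g.1.1 g.1.2)) x := rfl

lemma phi_t : φ t = 1 := by
  rw [show t = QuotientAddGroup.mk (of g01) from rfl, phi_mk, FreeAbelianGroup.lift_apply_of]
  decide

lemma gen_eq (g : Gen2 (ZMod 3)) :
    (QuotientAddGroup.mk (of g) : B2 (ZMod 3)) = wt g.1.1 g.1.2 • t := by
  obtain ⟨⟨a, b⟩, h⟩ := g
  have key : ∀ (h' : AddSubgroup.closure ({a, b} : Set (ZMod 3)) = ⊤),
      (of (⟨(a,b), h'⟩ : Gen2 (ZMod 3)) : FreeAbelianGroup _) - wt a b • of g01 ∈ S := by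
    intro h'
    rcases zmod3_cases a with ha | ha | ha <;> rcases zmod3_cases b with hb | hb | hb <;>
      subst ha hb
    · exfalso
      have h1 : (1 : ZMod 3) ∈ AddSubgroup.closure ({0, 0} : Set (ZMod 3)) := h' ▸ trivial
      rw [show ({(0:ZMod 3), 0} : Set (ZMod 3)) = {0} by simp,
        AddSubgroup.closure_singleton_zero] at h1
      exact one_ne_zero h1
    · -- (0,1): wt = 1
      have : wt 0 1 = 1 := by decide
      rw [this, one_smul]
      have : (⟨((0:ZMod 3),(1:ZMod 3)), h'⟩ : Gen2 (ZMod 3)) = g01 := Subtype.ext rfl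
      rw [this, sub_self]; exact zero_mem _
    · -- (0,2): wt = -1
      have : wt 0 2 = -1 := by decide
      rw [this]
      have h02 : (⟨((0:ZMod 3),(2:ZMod 3)), h'⟩ : Gen2 (ZMod 3)) = g02 := Subtype.ext rfl
      rw [h02]
      simpa using key02
    · -- (1,0): wt = 1
      have : wt 1 0 = 1 := by decide
      rw [this, one_smul]
      exact sym_mem _ g01 rfl rfl
    · -- (1,1)
      have : wt 1 1 = 1 := by decide
      rw [this, one_smul]
      have h11 : (⟨((1:ZMod 3),(1:ZMod 3)), h'⟩ : Gen2 (ZMod 3)) = g11 := Subtype.ext rfl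
      rw [h11]; exact g11_rel
    · -- (1,2): wt = 0
      have : wt 1 2 = 0 := by decide
      rw [this, zero_smul, sub_zero]
      have h12 : (⟨((1:ZMod 3),(2:ZMod 3)), h'⟩ : Gen2 (ZMod 3)) = g12 := Subtype.ext rfl
      rw [h12]; exact g12_mem
    · -- (2,0): wt = -1
      have : wt 2 0 = -1 := by decide
      rw [this]
      have h20 : (⟨((2:ZMod 3),(0:ZMod 3)), h'⟩ : Gen2 (ZMod 3)) = g20 := Subtype.ext rfl
      rw [h20]
      have h1 : of g20 - of g02 ∈ S := sym_mem g20 g02 rfl rfl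
      have : (of g20 - (-1 : ℤ) • of g01 : FreeAbelianGroup (Gen2 (ZMod 3))) =
          (of g20 - of g02) + (of g02 + of g01) := by
        simp; abel
      rw [this]
      exact S.add_mem h1 key02
    · -- (2,1): wt = 0
      have : wt 2 1 = 0 := by decide
      rw [this, zero_smul, sub_zero]
      have h21 : (⟨((2:ZMod 3),(1:ZMod 3)), h'⟩ : Gen2 (ZMod 3)) = g21 := Subtype.ext rfl
      rw [h21]; exact g21_mem
    · -- (2,2): wt = -1
      have : wt 2 2 = -1 := by decide
      rw [this]
      have h22 : (⟨((2:ZMod 3),(2:ZMod 3)), h'⟩ : Gen2 (ZMod 3)) = g22 := Subtype.ext rfl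
      rw [h22]
      have : (of g22 - (-1 : ℤ) • of g01 : FreeAbelianGroup (Gen2 (ZMod 3))) =
          (of g22 - of g02) + (of g02 + of g01) := by
        simp; abel
      rw [this]
      exact S.add_mem g22_rel key02
  have hmem := key h
  rw [show (wt a b • t : B2 (ZMod 3)) = QuotientAddGroup.mk (wt a b • of g01) by
    simp [t, QuotientAddGroup.mk_zsmul]]
  exact (QuotientAddGroup.eq_iff_sub_mem).2 hmem

lemma left_inv : ∀ x : B2 (ZMod 3), ψ (φ x) = x := by
  intro x
  refine QuotientAddGroup.induction_on x ?_
  intro z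
  refine FreeAbelianGroup.induction_on z ?_ ?_ ?_ ?_
  · simp
  · intro g
    have hφ : φ (QuotientAddGroup.mk (of g)) = wt g.1.1 g.1.2 := by
      rw [phi_mk, FreeAbelianGroup.lift_apply_of]
    rw [hφ]
    show wt g.1.1 g.1.2 • t = _
    exact (gen_eq g).symm
  · intro g hg
    have : (QuotientAddGroup.mk (-of g) : B2 (ZMod 3)) = -QuotientAddGroup.mk (of g) := by
      simp
    rw [this, map_neg, map_neg, hg]
  · intro x y hx hy
    have : (QuotientAddGroup.mk (x + y) : B2 (ZMod 3)) =
        QuotientAddGroup.mk x + QuotientAddGroup.mk y := rfl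
    rw [this, map_add, map_add, hx, hy]

lemma right_inv : ∀ n : ℤ, φ (ψ n) = n := by
  intro n
  show φ (n • t) = n
  rw [map_zsmul, phi_t, smul_eq_mul, mul_one]

end B2Aux

/-- `ℬ₂(ℤ/3)` is infinite cyclic: it is isomorphic to `ℤ`. -/
theorem B2_zmod3_isomorphic_int : Nonempty (B2 (ZMod 3) ≃+ ℤ) := by
  exact ⟨AddEquiv.mk' ⟨B2Aux.φ, B2Aux.ψ, B2Aux.left_inv, B2Aux.right_inv⟩ B2Aux.φ.map_add⟩
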